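/- Let F be ℝ or ℂ, let n ≥ 4, and let s be a finite-dimensional solvable Lie algebra over F whose nilradical is isomorphic to n_{n,1}. Then n ≤ dim s ≤ n+2; in particular, if s is not nilpotent then dim s = n+1 or dim s = n+2. -/

import Mathlib

/-- The family `e 1, …, e n` is a basis of `L` realizing the Lie brackets of the
nilpotent Lie algebra `n_{n,1}`. -/
def IsNn1Basis (F : Type*) [Field F] (n : ℕ) {L : Type*} [LieRing L] [LieAlgebra F L]
    (e : ℕ → L) : Prop :=
  LinearIndependent F (fun i : Fin n => e (i.val + 1)) ∧
  Submodule.span F (Set.range (fun i : Fin n => e (i.val + 1))) = ⊤ ∧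
  (∀ j k : ℕ, 1 ≤ j → j ≤ n - 1 → 1 ≤ k → k ≤ n - 1 → ⁅e j, e k⁆ = 0) ∧
  ⁅e 1, e n⁆ = 0 ∧
  (∀ k : ℕ, 2 ≤ k → k ≤ n - 1 → ⁅e k, e n⁆ = e (k - 1))

section Aux

variable {F : Type*} [Field F] {n : ℕ} {L : Type*} [LieRing L] [LieAlgebra F L] {e : ℕ → L}

noncomputable def nnBasis (he : IsNn1Basis F n e) : Module.Basis (Fin n) F L :=
  Module.Basis.mk he.1 (ge_of_eq he.2.1)

variable (he : IsNn1Basis F n e) (hn : 4 ≤ n)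

lemma nnBasis_apply (i : Fin n) : nnBasis he i = e (i.val + 1) := Module.Basis.mk_apply _ _ _

lemma e_eq_nnBasis (m : ℕ) (h1 : 1 ≤ m) (h2 : m ≤ n) :
    e m = nnBasis he ⟨m - 1, by omega⟩ := by
  rw [nnBasis_apply]; congr 1; simp only [Fin.val_mk]; omega

lemma coord_e (i : Fin n) (m : ℕ) (h1 : 1 ≤ m) (h2 : m ≤ n) :
    (nnBasis he).coord i (e m) = if i.val + 1 = m then 1 else 0 := by
  rw [e_eq_nnBasis he m h1 h2, Module.Basis.coord_apply, Module.Basis.repr_self, Finsupp.single_apply]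
  by_cases h : i.val + 1 = m
  · rw [if_pos h, if_pos (by rw [Fin.ext_iff]; simp; omega)]
  · rw [if_neg h, if_neg (by rw [Fin.ext_iff]; simp; omega)]

end Aux

section Aux2

variable {F : Type*} [Field F] {n : ℕ} {L : Type*} [LieRing L] [LieAlgebra F L] {e : ℕ → L}

/-- bracketing with `e n` on the right, as a linear map -/
noncomputable def PhiMap (e : ℕ → L) (n : ℕ) : L →ₗ[F] L where
  toFun y := ⁅y, e n⁆
  map_add' x y := add_lie x y (e n)
  map_smul' c x := smul_lie c x (e n)

/-- span of `e 1, …, e m` -/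
def Un (e : ℕ → L) (m : ℕ) : Submodule F L := Submodule.span F (e '' Set.Icc 1 m)

lemma PhiMap_apply (y : L) : PhiMap (F := F) e n y = ⁅y, e n⁆ := rfl

lemma Phi_en : PhiMap (F := F) e n (e n) = 0 := lie_self _

lemma Un_mono' {m m' : ℕ} (h : m ≤ m') : Un (F := F) e m ≤ Un e m' :=
  Submodule.span_mono (Set.image_mono (Set.Icc_subset_Icc_right h))

lemma e_mem_Un' {j m : ℕ} (h1 : 1 ≤ j) (h2 : j ≤ m) : e j ∈ Un (F := F) e m :=
  Submodule.subset_span ⟨j, ⟨h1, h2⟩, rfl⟩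

lemma Un_zero' : Un (F := F) e 0 = ⊥ := by
  rw [Un, Set.Icc_eq_empty (by omega), Set.image_empty, Submodule.span_empty]

variable (he : IsNn1Basis F n e) (hn : 4 ≤ n)

include he

lemma Phi_e (k : ℕ) (h1 : 2 ≤ k) (h2 : k ≤ n - 1) : PhiMap (F := F) e n (e k) = e (k - 1) :=
  he.2.2.2.2 k h1 h2

lemma Phi_e1 : PhiMap (F := F) e n (e 1) = 0 := he.2.2.2.1

lemma coord_eq_zero_of_mem_Un {m : ℕ} (hm : m ≤ n) {y : L} (hy : y ∈ Un (F := F) e m)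
    (i : Fin n) (hi : m ≤ i.val) : (nnBasis he).coord i y = 0 := by
  have h : Un (F := F) e m ≤ LinearMap.ker ((nnBasis he).coord i) := by
    rw [Un, Submodule.span_le]; rintro _ ⟨j, ⟨hj1, hj2⟩, rfl⟩
    simp only [SetLike.mem_coe, LinearMap.mem_ker]
    rw [coord_e he i j hj1 (le_trans hj2 hm), if_neg (by omega)]
  exact h hy

lemma mem_Un_of_coord {m : ℕ} {y : L}
    (h : ∀ i : Fin n, m ≤ i.val → (nnBasis he).coord i y = 0) :
    y ∈ Un (F := F) e m := by
  rw [← (nnBasis he).sum_repr y]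
  apply Submodule.sum_mem; intro i _
  by_cases hi : m ≤ i.val
  · have h0 := h i hi
    rw [Module.Basis.coord_apply] at h0
    rw [h0, zero_smul]; exact zero_mem _
  · apply Submodule.smul_mem
    rw [nnBasis_apply]
    exact e_mem_Un' (by omega) (by omega)

lemma mem_Un_top (y : L) : y ∈ Un (F := F) e n :=
  mem_Un_of_coord he (fun i hi => absurd i.isLt (by omega))

lemma Phi_mem (y : L) : PhiMap (F := F) e n y ∈ Un (F := F) e (n - 2) := by
  rw [← (nnBasis he).sum_repr y, map_sum]
  apply Submodule.sum_mem; intro i _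
  rw [map_smul]; apply Submodule.smul_mem
  rw [nnBasis_apply]
  by_cases h1 : i.val = 0
  · rw [h1, Phi_e1 he]; exact zero_mem _
  · by_cases h2 : i.val + 1 = n
    · rw [h2, Phi_en]; exact zero_mem _
    · rw [Phi_e he (i.val + 1) (by omega) (by omega)]
      exact e_mem_Un' (by omega) (by omega)

lemma coord_Phi (y : L) (i : Fin n) (hi : n - 2 ≤ i.val) :
    (nnBasis he).coord i (PhiMap (F := F) e n y) = 0 :=
  coord_eq_zero_of_mem_Un he (by omega) (Phi_mem he y) i hi

lemma Phi_mapsto (m : ℕ) (h2 : m ≤ n - 1) :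
    ∀ y ∈ Un (F := F) e m, PhiMap (F := F) e n y ∈ Un (F := F) e (m - 1) := by
  intro y hy
  have h : Un (F := F) e m ≤ (Un (F := F) e (m - 1)).comap (PhiMap (F := F) e n) := by
    rw [Un, Submodule.span_le]; rintro _ ⟨j, ⟨hj1, hj2⟩, rfl⟩
    simp only [SetLike.mem_coe, Submodule.mem_comap]
    by_cases hj : 2 ≤ j
    · rw [Phi_e he j hj (le_trans hj2 h2)]
      exact e_mem_Un' (by omega) (by omega)
    · have hj1' : j = 1 := by omega
      rw [hj1', Phi_e1 he]; exact zero_mem _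
  exact h hy

end Aux2

section DSection

variable {F : Type*} [Field F] {n : ℕ} {L : Type*} [LieRing L] [LieAlgebra F L] {e : ℕ → L}
variable (he : IsNn1Basis F n e) (hn : 4 ≤ n)
include he hn

lemma lie_ej (j : ℕ) (h1 : 1 ≤ j) (h2 : j ≤ n - 1) (y : L) :
    ⁅e j, y⁆ = (nnBasis he).coord ⟨n - 1, by omega⟩ y • ⁅e j, e n⁆ := by
  have key : LieAlgebra.ad F L (e j)
      = ((nnBasis he).coord ⟨n - 1, by omega⟩).smulRight ⁅e j, e n⁆ := by
    apply (nnBasis he).ext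
    intro i
    rw [nnBasis_apply, LieAlgebra.ad_apply, LinearMap.smulRight_apply,
      coord_e he ⟨n - 1, by omega⟩ (i.val + 1) (by omega) (by omega)]
    by_cases hi : i.val + 1 = n
    · rw [if_pos (by simp only [Fin.val_mk]; omega), one_smul, hi]
    · rw [if_neg (by simp only [Fin.val_mk]; omega), zero_smul,
        he.2.2.1 j (i.val + 1) h1 h2 (by omega) (by omega)]
  have := LinearMap.congr_fun key y
  rwa [LieAlgebra.ad_apply, LinearMap.smulRight_apply] at this

variable (D : L →ₗ[F] L) (hD : ∀ a b : L, D ⁅a, b⁆ = ⁅D a, b⁆ + ⁅a, D b⁆)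
include hD

lemma coord_top_D (j : ℕ) (h1 : 1 ≤ j) (h2 : j ≤ n - 1) :
    (nnBasis he).coord ⟨n - 1, by omega⟩ (D (e j)) = 0 := by
  have key : ∀ j k : ℕ, 1 ≤ j → j ≤ n - 1 → 1 ≤ k → k ≤ n - 1 →
      (nnBasis he).coord ⟨n - 1, by omega⟩ (D (e j)) • ⁅e k, e n⁆
        = (nnBasis he).coord ⟨n - 1, by omega⟩ (D (e k)) • ⁅e j, e n⁆ := by
    intro j k hj1 hj2 hk1 hk2
    have h0 : (0 : L) = ⁅D (e j), e k⁆ + ⁅e j, D (e k)⁆ := by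
      rw [← hD, he.2.2.1 j k hj1 hj2 hk1 hk2, map_zero]
    rw [← lie_skew, lie_ej he hn k hk1 hk2 (D (e j)),
      lie_ej he hn j hj1 hj2 (D (e k))] at h0
    have h0' := h0.symm
    rw [neg_add_eq_zero] at h0'
    exact h0'
  -- first: the coefficient for j = 2 vanishes
  have h2' : (nnBasis he).coord ⟨n - 1, by omega⟩ (D (e 2)) = 0 := by
    have hk := key 2 3 (by omega) (by omega) (by omega) (by omega)
    rw [he.2.2.2.2 3 (by omega) (by omega), he.2.2.2.2 2 (by omega) (by omega)] at hk
    have := congrArg ((nnBasis he).coord ⟨1, by omega⟩) hk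
    rw [map_smul, map_smul, coord_e he _ (3 - 1) (by omega) (by omega),
      coord_e he _ (2 - 1) (by omega) (by omega)] at this
    simpa using this
  by_cases hj : j = 2
  · rw [hj]; exact h2'
  · have hk := key j 2 h1 h2 (by omega) (by omega)
    rw [h2', zero_smul, he.2.2.2.2 2 (by omega) (by omega)] at hk
    have := congrArg ((nnBasis he).coord ⟨0, by omega⟩) hk
    rw [map_smul, map_zero, coord_e he _ (2 - 1) (by omega) (by omega)] at this
    simpa using this

lemma D_rec (k : ℕ) (h1 : 2 ≤ k) (h2 : k ≤ n - 1) :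
    D (e (k - 1)) = PhiMap (F := F) e n (D (e k))
      + (nnBasis he).coord ⟨n - 1, by omega⟩ (D (e n)) • e (k - 1) := by
  have h0 := hD (e k) (e n)
  rw [he.2.2.2.2 k h1 h2] at h0
  rw [h0, lie_ej he hn k (by omega) h2 (D (e n)), he.2.2.2.2 k h1 h2, PhiMap_apply]

lemma coord_top_D_mul (y : L) :
    (nnBasis he).coord ⟨n - 1, by omega⟩ (D y)
      = (nnBasis he).coord ⟨n - 1, by omega⟩ y
        * (nnBasis he).coord ⟨n - 1, by omega⟩ (D (e n)) := by
  have key : ((nnBasis he).coord ⟨n - 1, by omega⟩).comp D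
      = (nnBasis he).coord ⟨n - 1, by omega⟩ (D (e n)) • (nnBasis he).coord ⟨n - 1, by omega⟩ := by
    apply (nnBasis he).ext
    intro i
    rw [LinearMap.comp_apply, LinearMap.smul_apply, nnBasis_apply,
      coord_e he ⟨n - 1, by omega⟩ (i.val + 1) (by omega) (by omega), smul_eq_mul]
    by_cases hi : i.val + 1 = n
    · rw [if_pos (by simp only [Fin.val_mk]; omega), mul_one, hi]
    · rw [if_neg (by simp only [Fin.val_mk]; omega), mul_zero,
        coord_top_D he hn D hD (i.val + 1) (by omega) (by omega)]
  have := LinearMap.congr_fun key y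
  rw [LinearMap.comp_apply, LinearMap.smul_apply, smul_eq_mul] at this
  rw [this, mul_comm]

lemma coord_sub_D (j : ℕ) (h1 : 1 ≤ j) (h2 : j ≤ n - 2) :
    (nnBasis he).coord ⟨n - 2, by omega⟩ (D (e j)) = 0 := by
  have hrec := D_rec he hn D hD (j + 1) (by omega) (by omega)
  rw [Nat.add_sub_cancel] at hrec
  rw [hrec, map_add, map_smul,
    coord_Phi he (D (e (j + 1))) ⟨n - 2, by omega⟩ (by simp only [Fin.val_mk]; omega),
    coord_e he ⟨n - 2, by omega⟩ j h1 (by omega), if_neg (by simp only [Fin.val_mk]; omega),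
    smul_zero, add_zero]

end DSection

section DSection2

variable {F : Type*} [Field F] {n : ℕ} {L : Type*} [LieRing L] [LieAlgebra F L] {e : ℕ → L}
variable (he : IsNn1Basis F n e) (hn : 4 ≤ n)
variable (D : L →ₗ[F] L) (hD : ∀ a b : L, D ⁅a, b⁆ = ⁅D a, b⁆ + ⁅a, D b⁆)
include he hn hD

lemma coord_sub_D_mul (y : L) :
    (nnBasis he).coord ⟨n - 2, by omega⟩ (D y)
      = (nnBasis he).coord ⟨n - 2, by omega⟩ y
          * (nnBasis he).coord ⟨n - 2, by omega⟩ (D (e (n - 1)))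
        + (nnBasis he).coord ⟨n - 1, by omega⟩ y
          * (nnBasis he).coord ⟨n - 2, by omega⟩ (D (e n)) := by
  have key : ((nnBasis he).coord ⟨n - 2, by omega⟩).comp D
      = (nnBasis he).coord ⟨n - 2, by omega⟩ (D (e (n - 1))) • (nnBasis he).coord ⟨n - 2, by omega⟩
        + (nnBasis he).coord ⟨n - 2, by omega⟩ (D (e n)) • (nnBasis he).coord ⟨n - 1, by omega⟩ := by
    apply (nnBasis he).ext
    intro i
    rw [LinearMap.comp_apply, LinearMap.add_apply, LinearMap.smul_apply, LinearMap.smul_apply,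
      nnBasis_apply, coord_e he ⟨n - 2, by omega⟩ (i.val + 1) (by omega) (by omega),
      coord_e he ⟨n - 1, by omega⟩ (i.val + 1) (by omega) (by omega), smul_eq_mul, smul_eq_mul]
    by_cases hi1 : i.val + 1 = n - 1
    · rw [if_pos (by simp only [Fin.val_mk]; omega), if_neg (by simp only [Fin.val_mk]; omega),
        mul_one, mul_zero, add_zero, hi1]
    · by_cases hi2 : i.val + 1 = n
      · rw [if_neg (by simp only [Fin.val_mk]; omega), if_pos (by simp only [Fin.val_mk]; omega),
          mul_one, mul_zero, zero_add, hi2]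
      · rw [if_neg (by simp only [Fin.val_mk]; omega), if_neg (by simp only [Fin.val_mk]; omega),
          mul_zero, mul_zero, add_zero,
          coord_sub_D he hn D hD (i.val + 1) (by omega) (by omega)]
  have := LinearMap.congr_fun key y
  rw [LinearMap.comp_apply, LinearMap.add_apply, LinearMap.smul_apply, LinearMap.smul_apply,
    smul_eq_mul, smul_eq_mul] at this
  rw [this]; ring

end DSection2

section DSection3

variable {F : Type*} [Field F] {n : ℕ} {L : Type*} [LieRing L] [LieAlgebra F L] {e : ℕ → L}
variable (he : IsNn1Basis F n e) (hn : 4 ≤ n)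

lemma comm_top (D₁ D₂ : L →ₗ[F] L) (hD₁ : ∀ a b : L, D₁ ⁅a, b⁆ = ⁅D₁ a, b⁆ + ⁅a, D₁ b⁆)
    (hD₂ : ∀ a b : L, D₂ ⁅a, b⁆ = ⁅D₂ a, b⁆ + ⁅a, D₂ b⁆) :
    (nnBasis he).coord ⟨n - 1, by omega⟩ (D₁ (D₂ (e n)) - D₂ (D₁ (e n))) = 0 := by
  rw [map_sub, coord_top_D_mul he hn D₁ hD₁ (D₂ (e n)), coord_top_D_mul he hn D₂ hD₂ (D₁ (e n))]
  ring

lemma comm_sub (D₁ D₂ : L →ₗ[F] L) (hD₁ : ∀ a b : L, D₁ ⁅a, b⁆ = ⁅D₁ a, b⁆ + ⁅a, D₁ b⁆)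
    (hD₂ : ∀ a b : L, D₂ ⁅a, b⁆ = ⁅D₂ a, b⁆ + ⁅a, D₂ b⁆) :
    (nnBasis he).coord ⟨n - 2, by omega⟩ (D₁ (D₂ (e (n - 1))) - D₂ (D₁ (e (n - 1)))) = 0 := by
  rw [map_sub, coord_sub_D_mul he hn D₁ hD₁ (D₂ (e (n - 1))),
    coord_sub_D_mul he hn D₂ hD₂ (D₁ (e (n - 1))),
    coord_top_D_mul he hn D₂ hD₂ (e (n - 1)), coord_top_D_mul he hn D₁ hD₁ (e (n - 1)),
    coord_e he ⟨n - 1, by omega⟩ (n - 1) (by omega) (by omega),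
    if_neg (by simp only [Fin.val_mk]; omega)]
  ring

variable (D : L →ₗ[F] L) (hD : ∀ a b : L, D ⁅a, b⁆ = ⁅D a, b⁆ + ⁅a, D b⁆)
variable (hlam : (nnBasis he).coord ⟨n - 1, by omega⟩ (D (e n)) = 0)
variable (hmu : (nnBasis he).coord ⟨n - 2, by omega⟩ (D (e (n - 1))) = 0)
include he hn hD hlam

omit hD in
lemma D_en_mem : D (e n) ∈ Un (F := F) e (n - 1) := by
  apply mem_Un_of_coord he
  intro i hi
  have : i = ⟨n - 1, by omega⟩ := Fin.ext (by simp only [Fin.val_mk]; have := i.isLt; omega)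
  rw [this]; exact hlam

include hmu

lemma D_strict (k : ℕ) (h1 : 1 ≤ k) (h2 : k ≤ n - 1) : D (e k) ∈ Un (F := F) e (k - 1) := by
  have main : ∀ m k : ℕ, k = n - 1 - m → 1 ≤ k → D (e k) ∈ Un (F := F) e (k - 1) := by
    intro m
    induction m with
    | zero =>
      intro k hk _
      have hk' : k = n - 1 := by omega
      subst hk'
      apply mem_Un_of_coord he
      intro i hi
      by_cases h : i.val = n - 2
      · have : i = ⟨n - 2, by omega⟩ := Fin.ext (by simp only [Fin.val_mk]; omega)
        rw [this]; exact hmu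
      · have : i = ⟨n - 1, by omega⟩ :=
          Fin.ext (by simp only [Fin.val_mk]; have := i.isLt; omega)
        rw [this]
        exact coord_top_D he hn D hD (n - 1) (by omega) (by omega)
    | succ m ih =>
      intro k hk h1
      by_cases hcase : n - 1 - m = k
      · exact ih k hcase.symm h1
      · have hk1 : k + 1 = n - 1 - m := by omega
        have hk2 : k + 1 ≤ n - 1 := by omega
        have hmem := ih (k + 1) hk1 (by omega)
        rw [Nat.add_sub_cancel] at hmem
        have hrec := D_rec he hn D hD (k + 1) (by omega) hk2
        rw [Nat.add_sub_cancel] at hrec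
        rw [hrec, hlam, zero_smul, add_zero]
        exact Phi_mapsto he k (by omega) _ hmem
  exact main (n - 1 - k) k (by omega) h1

lemma D_mem_top (y : L) : D y ∈ Un (F := F) e (n - 1) := by
  have h : Un (F := F) e n ≤ (Un (F := F) e (n - 1)).comap D := by
    rw [Un, Submodule.span_le]; rintro _ ⟨j, ⟨hj1, hj2⟩, rfl⟩
    simp only [SetLike.mem_coe, Submodule.mem_comap]
    by_cases hj : j = n
    · rw [hj]; exact D_en_mem he hn D hlam
    · exact Un_mono' (by omega) (D_strict he hn D hD hlam hmu j hj1 (by omega))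
  exact h (mem_Un_top he y)

lemma D_mapsto (m : ℕ) (hm : m ≤ n - 1) :
    ∀ y ∈ Un (F := F) e m, D y ∈ Un (F := F) e (m - 1) := by
  intro y hy
  have h : Un (F := F) e m ≤ (Un (F := F) e (m - 1)).comap D := by
    rw [Un, Submodule.span_le]; rintro _ ⟨j, ⟨hj1, hj2⟩, rfl⟩
    simp only [SetLike.mem_coe, Submodule.mem_comap]
    exact Un_mono' (by omega)
      (D_strict he hn D hD hlam hmu j hj1 (by omega))
  exact h hy

end DSection3

section Chain

lemma nilpotent_of_chain {F : Type*} [Field F] {S : Type*} [LieRing S] [LieAlgebra F S]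
    [FiniteDimensional F S] (J : LieIdeal F S) (M : ℕ) (C : ℕ → Submodule F S)
    (h0 : ∀ y : S, y ∈ J → y ∈ C 0)
    (hstep : ∀ m : ℕ, ∀ z : S, z ∈ J → ∀ y ∈ C m, ⁅z, y⁆ ∈ C (m + 1))
    (hM : C M = ⊥) : LieRing.IsNilpotent J := by
  rw [LieAlgebra.isNilpotent_iff_forall (R := F)]
  intro z
  refine ⟨M, LinearMap.ext fun y => ?_⟩
  have key : ∀ m : ℕ, (((LieAlgebra.ad F J z) ^ m) y : S) ∈ C m := by
    intro m
    induction m with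
    | zero =>
      rw [pow_zero, Module.End.one_apply]
      exact h0 _ y.2
    | succ m ih =>
      rw [pow_succ', Module.End.mul_apply]
      exact hstep m z z.2 _ ih
  have hMy := key M
  rw [hM, Submodule.mem_bot] at hMy
  rw [LinearMap.zero_apply]
  exact Subtype.ext hMy

end Chain

/-- Over `F = ℝ` or `ℂ`, a finite-dimensional solvable Lie algebra
`S` whose nilradical is isomorphic to `n_{n,1}` (n ≥ 4) satisfies
`n ≤ dim S ≤ n + 2`; if moreover `S` is not nilpotent then `dim S = n+1` or `n+2`. -/
theorem solvable_with_nilradical_nn1_dim_bound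
    (F : Type*) [RCLike F] (n : ℕ) (hn : 4 ≤ n)
    (S : Type*) [LieRing S] [LieAlgebra F S] [FiniteDimensional F S]
    (hsolv : LieAlgebra.IsSolvable S)
    (N : LieIdeal F S)
    (hNnil : LieModule.IsNilpotent N N)
    (hNmax : ∀ I : LieIdeal F S, LieModule.IsNilpotent I I → I ≤ N)
    (e : ℕ → N) (he : IsNn1Basis F n e) :
    n ≤ Module.finrank F S ∧ Module.finrank F S ≤ n + 2 ∧
    (¬ LieModule.IsNilpotent S S →
      Module.finrank F S = n + 1 ∨ Module.finrank F S = n + 2) := by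
  classical
  -- the action of `S` on the ideal `N`
  have hDz : ∀ (z : S) (a c : N), ⁅z, ⁅a, c⁆⁆ = ⁅(⁅z, a⁆ : N), c⁆ + ⁅a, (⁅z, c⁆ : N)⁆ := by
    intro z a c
    exact Subtype.ext (leibniz_lie z (a : S) (c : S))
  set DL : S → (N →ₗ[F] N) := fun z => ((LieModule.toEnd F S N) z : N →ₗ[F] N) with hDLdef
  have hDLapp : ∀ (z : S) (m : N), DL z m = ⁅z, m⁆ := fun z m => rfl
  have hDL : ∀ z : S, ∀ a c : N, DL z ⁅a, c⁆ = ⁅DL z a, c⁆ + ⁅a, DL z c⁆ := by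
    intro z a c
    rw [hDLapp, hDLapp, hDLapp]
    exact hDz z a c
  -- the two linear functionals
  set A1 : S →ₗ[F] N :=
    { toFun := fun z => ⁅z, e n⁆
      map_add' := fun x y => add_lie x y (e n)
      map_smul' := fun c x => smul_lie c x (e n) } with hA1def
  set A2 : S →ₗ[F] N :=
    { toFun := fun z => ⁅z, e (n - 1)⁆
      map_add' := fun x y => add_lie x y (e (n - 1))
      map_smul' := fun c x => smul_lie c x (e (n - 1)) } with hA2def
  set lam : S →ₗ[F] F := ((nnBasis he).coord ⟨n - 1, by omega⟩).comp A1 with hlamdef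
  set mu : S →ₗ[F] F := ((nnBasis he).coord ⟨n - 2, by omega⟩).comp A2 with hmudef
  have hlam_eq : ∀ z : S, lam z = (nnBasis he).coord ⟨n - 1, by omega⟩ (DL z (e n)) := by
    intro z; rfl
  have hmu_eq : ∀ z : S, mu z = (nnBasis he).coord ⟨n - 2, by omega⟩ (DL z (e (n - 1))) := by
    intro z; rfl
  -- both functionals vanish on brackets
  have hbr : ∀ x y : S, lam ⁅x, y⁆ = 0 ∧ mu ⁅x, y⁆ = 0 := by
    intro x y
    have hc1 : ∀ m : N, ⁅⁅x, y⁆, m⁆ = DL x (DL y m) - DL y (DL x m) := by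
      intro m
      rw [hDLapp, hDLapp, hDLapp, hDLapp]
      exact lie_lie x y m
    constructor
    · rw [hlam_eq, hDLapp, hc1]
      exact comm_top he hn (DL x) (DL y) (hDL x) (hDL y)
    · rw [hmu_eq, hDLapp, hc1]
      exact comm_sub he hn (DL x) (DL y) (hDL x) (hDL y)
  -- the ideal K = ker lam ⊓ ker mu
  set K : LieIdeal F S :=
    { (LinearMap.ker lam ⊓ LinearMap.ker mu : Submodule F S) with
      lie_mem := fun {x y} _ => by
        show ⁅x, y⁆ ∈ (LinearMap.ker lam ⊓ LinearMap.ker mu : Submodule F S)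
        simp only [Submodule.mem_inf, LinearMap.mem_ker]
        exact hbr x y } with hKdef
  have hmemK : ∀ z : S, z ∈ K ↔ lam z = 0 ∧ mu z = 0 := by
    intro z
    show z ∈ (LinearMap.ker lam ⊓ LinearMap.ker mu : Submodule F S) ↔ _
    rw [Submodule.mem_inf, LinearMap.mem_ker, LinearMap.mem_ker]
  -- N is contained in K
  have hNK : N ≤ K := by
    intro a ha
    rw [hmemK]
    constructor
    · have h1 : A1 a = PhiMap (F := F) e n ⟨a, ha⟩ := Subtype.ext rfl
      show (nnBasis he).coord _ (A1 a) = 0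
      rw [h1]
      exact coord_Phi he ⟨a, ha⟩ ⟨n - 1, by omega⟩ (by simp only [Fin.val_mk]; omega)
    · have h2 : A2 a = ⁅(⟨a, ha⟩ : N), e (n - 1)⁆ := Subtype.ext rfl
      have h3 : ⁅(⟨a, ha⟩ : N), e (n - 1)⁆ = -⁅e (n - 1), (⟨a, ha⟩ : N)⁆ :=
        (lie_skew _ _).symm
      show (nnBasis he).coord _ (A2 a) = 0
      rw [h2, h3, lie_ej he hn (n - 1) (by omega) (le_refl _) (⟨a, ha⟩ : N),
        he.2.2.2.2 (n - 1) (by omega) (le_refl _), map_neg, map_smul,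
        show n - 1 - 1 = n - 2 from by omega,
        coord_e he ⟨n - 2, by omega⟩ (n - 2) (by omega) (by omega),
        if_neg (by simp only [Fin.val_mk]; omega)]
      simp
  -- the filtration of S
  set iota : N →ₗ[F] S := (N : Submodule F S).subtype with hiota
  set Us : ℕ → Submodule F S := fun m => (Un (F := F) e m).map iota with hUsdef
  have hUs_step : ∀ z : S, z ∈ K → ∀ q : ℕ, q ≤ n - 1 → ∀ y ∈ Us q, ⁅z, y⁆ ∈ Us (q - 1) := by
    intro z hz q hq y hy
    obtain ⟨w, hw, rfl⟩ := Submodule.mem_map.mp hy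
    rw [hmemK] at hz
    have hco : ⁅z, (iota w : S)⁆ = iota (DL z w) := rfl
    rw [hco]
    exact Submodule.mem_map_of_mem
      (D_mapsto he hn (DL z) (hDL z) (by rw [← hlam_eq]; exact hz.1)
        (by rw [← hmu_eq]; exact hz.2) q hq w hw)
  have hUs_N : ∀ z : S, z ∈ K → ∀ y : S, y ∈ N → ⁅z, y⁆ ∈ Us (n - 1) := by
    intro z hz y hy
    rw [hmemK] at hz
    have hco : ⁅z, y⁆ = iota (DL z ⟨y, hy⟩) := rfl
    rw [hco]
    exact Submodule.mem_map_of_mem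
      (D_mem_top he hn (DL z) (hDL z) (by rw [← hlam_eq]; exact hz.1)
        (by rw [← hmu_eq]; exact hz.2) ⟨y, hy⟩)
  -- key step: an ideal inside K whose self-brackets lie in N is inside N
  have hstep : ∀ J : LieIdeal F S, J ≤ K → (∀ z ∈ J, ∀ y ∈ J, ⁅z, y⁆ ∈ N) → J ≤ N := by
    intro J hJK hJJ
    have hsub : N ⊔ J ≤ K := sup_le hNK hJK
    have hnilJ : LieModule.IsNilpotent ↥(N ⊔ J) ↥(N ⊔ J) := by
      apply nilpotent_of_chain (N ⊔ J) (n + 1)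
        (fun m => match m with
          | 0 => LieSubmodule.toSubmodule (N ⊔ J)
          | 1 => LieSubmodule.toSubmodule N
          | (q + 2) => Us (n - 1 - q))
      · intro y hy; exact hy
      · intro m z hz y hy
        match m with
        | 0 =>
          rw [LieSubmodule.mem_toSubmodule, LieSubmodule.mem_sup] at hy
          rw [LieSubmodule.mem_sup] at hz
          obtain ⟨a, haN, c, hcJ, rfl⟩ := hz
          obtain ⟨a', haN', c', hcJ', rfl⟩ := hy
          show ⁅a + c, a' + c'⁆ ∈ LieSubmodule.toSubmodule N
          rw [LieSubmodule.mem_toSubmodule, add_lie, lie_add, lie_add]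
          exact N.add_mem
            (N.add_mem (lie_mem_left F S N a a' haN) (lie_mem_left F S N a c' haN))
            (N.add_mem (lie_mem_right F S N c a' haN') (hJJ c hcJ c' hcJ'))
        | 1 =>
          exact hUs_N z (hsub hz) y hy
        | (q + 2) =>
          exact hUs_step z (hsub hz) (n - 1 - q) (by omega) y hy
      · rw [show n + 1 = (n - 1) + 2 from by omega]
        show Us (n - 1 - (n - 1)) = ⊥
        rw [Nat.sub_self]
        show (Un (F := F) e 0).map iota = ⊥
        rw [Un_zero', Submodule.map_bot]
    have hle := hNmax (N ⊔ J) hnilJ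
    exact le_trans le_sup_right hle
  -- descending induction along the derived series: K ≤ N
  obtain ⟨k₀, hk₀⟩ := (LieAlgebra.isSolvable_iff F S).mp hsolv
  have desc : ∀ m : ℕ, LieAlgebra.derivedSeriesOfIdeal F S (k₀ - m) K ≤ N := by
    intro m
    induction m with
    | zero =>
      rw [Nat.sub_zero]
      have h1 : LieAlgebra.derivedSeriesOfIdeal F S k₀ K
          ≤ LieAlgebra.derivedSeriesOfIdeal F S k₀ ⊤ :=
        LieAlgebra.derivedSeriesOfIdeal_mono le_top k₀
      rw [← LieAlgebra.derivedSeries_def, hk₀] at h1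
      exact le_trans h1 bot_le
    | succ m ih =>
      by_cases hc : k₀ - (m + 1) = k₀ - m
      · rw [hc]; exact ih
      · have h2 : k₀ - m = (k₀ - (m + 1)) + 1 := by omega
        rw [h2] at ih
        apply hstep
        · exact le_trans (LieAlgebra.derivedSeriesOfIdeal_le_self K _) (le_refl K)
        · intro z hz y hy
          apply ih
          rw [LieAlgebra.derivedSeriesOfIdeal_succ]
          exact LieSubmodule.lie_mem_lie hz hy
  have hKN : K ≤ N := by
    have h3 := desc k₀
    rwa [Nat.sub_self, LieAlgebra.derivedSeriesOfIdeal_zero] at h3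
  -- rank computations
  have hNrank : Module.finrank F ↥(LieSubmodule.toSubmodule N) = n := by
    have h7 : Module.finrank F ↥N = n := by
      rw [Module.finrank_eq_card_basis (nnBasis he), Fintype.card_fin]
    exact h7
  have hlow : n ≤ Module.finrank F S :=
    hNrank ▸ Submodule.finrank_le (LieSubmodule.toSubmodule N)
  set T : S →ₗ[F] F × F := lam.prod mu with hTdef
  have hker : LinearMap.ker T ≤ LieSubmodule.toSubmodule N := by
    intro z hz
    rw [LinearMap.mem_ker] at hz
    have hzK : z ∈ K := (hmemK z).mpr ⟨congrArg Prod.fst hz, congrArg Prod.snd hz⟩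
    exact (LieSubmodule.mem_toSubmodule N).mpr (hKN hzK)
  have hrange : Module.finrank F (LinearMap.range T) ≤ 2 := by
    have h4 : Module.finrank F (LinearMap.range T) ≤ Module.finrank F (F × F) :=
      Submodule.finrank_le _
    rwa [Module.finrank_prod, Module.finrank_self] at h4
  have hupper : Module.finrank F S ≤ n + 2 := by
    have h5 := LinearMap.finrank_range_add_finrank_ker T
    have h6 : Module.finrank F (LinearMap.ker T) ≤ n :=
      hNrank ▸ Submodule.finrank_mono hker
    omega
  refine ⟨hlow, hupper, ?_⟩
  intro hnotnil
  have hne : Module.finrank F S ≠ n := by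
    intro hrank
    apply hnotnil
    have htop : LieSubmodule.toSubmodule N = ⊤ :=
      Submodule.eq_top_of_finrank_eq (by rw [hNrank, hrank])
    have hNtop : N = (⊤ : LieIdeal F S) := by
      rw [← LieSubmodule.toSubmodule_inj, htop, LieSubmodule.top_toSubmodule]
    rw [hNtop] at hNnil
    exact (Equiv.lieModule_isNilpotent_iff LieIdeal.topEquiv
      LieIdeal.topEquiv.toLinearEquiv (fun _ _ => rfl)).mp hNnil
  omega
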